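/- arXiv:1006.3407 — 3 statements merged into one kernel-verified Lean document; each statement's English description precedes it below -/
import Mathlib

section
/- In any alternative ring, any subring generated by two elements is associative (Artin's theorem). -/
namespace ArtinAux

variable {R : Type*} [NonAssocRing R]

/-- The associator. -/
def asc (x y z : R) : R := x * y * z - x * (y * z)

theorem asc_eq_zero {x y z : R} (h : asc x y z = 0) : x * y * z = x * (y * z) :=
  sub_eq_zero.mp h

theorem asc11 (hL : ∀ x y : R, x * (x * y) = (x * x) * y) (x y : R) : asc x x y = 0 := by
  unfold asc; rw [← hL x y, sub_self]

theorem asc22 (hR : ∀ x y : R, (y * x) * x = y * (x * x)) (x y : R) : asc x y y = 0 := by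
  unfold asc; rw [hR y x, sub_self]

theorem swap12 (hL : ∀ x y : R, x * (x * y) = (x * x) * y) (x y z : R) :
    asc y x z = - asc x y z := by
  have h := asc11 hL (x + y) z
  have e : asc (x + y) (x + y) z = asc x x z + asc x y z + asc y x z + asc y y z := by
    simp only [asc, add_mul, mul_add]; abel
  rw [e, asc11 hL, asc11 hL, zero_add, add_zero] at h
  exact eq_neg_of_add_eq_zero_right h

theorem swap23 (hR : ∀ x y : R, (y * x) * x = y * (x * x)) (x y z : R) :
    asc x z y = - asc x y z := by
  have h := asc22 hR x (y + z)
  have e : asc x (y + z) (y + z) = asc x y y + asc x y z + asc x z y + asc x z z := by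
    simp only [asc, add_mul, mul_add]; abel
  rw [e, asc22 hR, asc22 hR, zero_add, add_zero] at h
  exact eq_neg_of_add_eq_zero_right h

section Identities

variable (hL : ∀ x y : R, x * (x * y) = (x * x) * y)
variable (hR : ∀ x y : R, (y * x) * x = y * (x * x))

include hL hR

/-- Cyclic invariance of the associator. -/
theorem cyc (x y z : R) : asc x y z = asc y z x := by
  rw [swap23 hR y x z, swap12 hL x y z, neg_neg]

theorem asc13 (x y : R) : asc x y x = 0 := by
  rw [swap23 hR x x y, asc11 hL, neg_zero]

omit hL hR in
/-- The Teichmüller identity — valid in any (non-associative) ring. -/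
theorem teich (w x y z : R) :
    asc (w * x) y z - asc w (x * y) z + asc w x (y * z)
      = w * asc x y z + asc w x y * z := by
  simp only [asc, mul_sub, sub_mul]
  abel

/-- The key "Moufang-type" identity in alternative rings:
`[x, y, x*z] = [x, y, z] * x`. -/
theorem star (x y z : R) : asc x y (x * z) = asc x y z * x := by
  -- Teichmüller instance T(y, x, x, z)
  have h1 := teich y x x z
  rw [asc11 hL x z, asc22 hR y x, mul_zero, zero_mul, add_zero] at h1
  -- h1 : asc (y*x) x z - asc y (x*x) z + asc y x (x*z) = 0
  -- Teichmüller instance T(z, y, x, x)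
  have h2 := teich z y x x
  rw [asc22 hR (z * y) x, asc22 hR y x, mul_zero, zero_add] at h2
  -- h2 : 0 - asc z (y*x) x + asc z y (x*x) = asc z y x * x
  have c1 : asc z (y * x) x = asc (y * x) x z := by
    rw [cyc hL hR z (y * x) x]
  have c2 : asc z y (x * x) = asc y (x * x) z := by
    rw [cyc hL hR z y (x * x)]
  have c3 : asc z y x = - asc x y z := by
    rw [cyc hL hR z y x, swap12 hL x y z]
  rw [c1, c2, c3, neg_mul] at h2
  -- h2 : 0 - asc (y*x) x z + asc y (x*x) z = -(asc x y z * x)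
  have key : asc y x (x * z) = -(asc x y z * x) := by
    calc asc y x (x * z)
        = (asc (y * x) x z - asc y (x * x) z + asc y x (x * z))
            + (0 - asc (y * x) x z + asc y (x * x) z) := by abel
      _ = 0 + -(asc x y z * x) := by rw [h1, h2]
      _ = -(asc x y z * x) := by abel
  have h3 := swap12 hL x y (x * z)
  rw [key] at h3
  -- h3 : -(asc x y z * x) = - asc x y (x*z)
  exact (neg_injective h3).symm

end Identities

/-- Monomials of degree `n` in the two generators `a`, `b`. -/
inductive IsMon (a b : R) : ℕ → R → Prop
  | a : IsMon a b 1 a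
  | b : IsMon a b 1 b
  | mul {m n : ℕ} {x y : R} : IsMon a b m x → IsMon a b n y → IsMon a b (m + n) (x * y)

theorem IsMon.pos {a b : R} {n : ℕ} {x : R} (h : IsMon a b n x) : 1 ≤ n := by
  induction h with
  | a => omega
  | b => omega
  | mul _ _ ih1 ih2 => omega

theorem IsMon.one_cases {a b x : R} (h : IsMon a b 1 x) : x = a ∨ x = b := by
  have aux : ∀ n : ℕ, ∀ y : R, IsMon a b n y → n = 1 → y = a ∨ y = b := by
    intro n y hy
    induction hy with
    | a => intro _; exact Or.inl rfl
    | b => intro _; exact Or.inr rfl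
    | mul h1 h2 ih1 ih2 =>
      intro hn
      have := h1.pos
      have := h2.pos
      omega
  exact aux 1 x h rfl

section Key

variable (hL : ∀ x y : R, x * (x * y) = (x * x) * y)
variable (hR : ∀ x y : R, (y * x) * x = y * (x * x))

/-- The heart of Artin's theorem: all associators of monomials in two
generators vanish. Strong induction on the total degree. -/
theorem key (hL : ∀ x y : R, x * (x * y) = (x * x) * y)
    (hR : ∀ x y : R, (y * x) * x = y * (x * x)) (a b : R) :
    ∀ n i j k : ℕ, ∀ p q r : R, IsMon a b i p → IsMon a b j q →
    IsMon a b k r → i + j + k = n → asc p q r = 0 := by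
  intro n
  induction n using Nat.strong_induction_on with
  | _ n IH =>
  -- First: using the induction hypothesis, every monomial of degree `2 ≤ i < n`
  -- can be rewritten as (generator) * (monomial of degree i - 1).
  have split : ∀ i : ℕ, ∀ p : R, IsMon a b i p → i < n → 2 ≤ i →
      ∃ j : ℕ, ∃ p' : R, IsMon a b j p' ∧ (p = a * p' ∨ p = b * p') ∧ i = 1 + j := by
    intro i p hp
    induction hp with
    | a => intro _ h2; omega
    | b => intro _ h2; omega
    | mul hu hv ihu ihv =>
      rename_i m k u v
      intro hlt _
      have hm1 := hu.pos
      have hk1 := hv.pos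
      rcases Nat.lt_or_ge m 2 with hm | hm
      · have hm' : m = 1 := by omega
        subst hm'
        rcases hu.one_cases with rfl | rfl
        · exact ⟨k, v, hv, Or.inl rfl, by omega⟩
        · exact ⟨k, v, hv, Or.inr rfl, by omega⟩
      · obtain ⟨j, u', hu', hcase, hj⟩ := ihu (by omega) hm
        have hmon : IsMon a b (j + k) (u' * v) := hu'.mul hv
        have htot : 1 + j + k < n := by omega
        refine ⟨j + k, u' * v, hmon, ?_, by omega⟩
        rcases hcase with rfl | rfl
        · left
          have h0 : asc a u' v = 0 :=
            IH (1 + j + k) htot 1 j k a u' v IsMon.a hu' hv rfl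
          rw [← asc_eq_zero h0]
        · right
          have h0 : asc b u' v = 0 :=
            IH (1 + j + k) htot 1 j k b u' v IsMon.b hu' hv rfl
          rw [← asc_eq_zero h0]
  -- Second: the case where the first argument is a generator,
  -- by strong induction on the degree of the second argument.
  have B : ∀ k : ℕ, ∀ c s t : R, ∀ kt : ℕ, IsMon a b 1 c → IsMon a b k s →
      IsMon a b kt t → 1 + k + kt = n → asc c s t = 0 := by
    intro k
    induction k using Nat.strong_induction_on with
    | _ k IHB =>
    intro c s t kt hc hs ht hn
    have hk1 := hs.pos
    have hkt1 := ht.pos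
    rcases Nat.lt_or_ge k 2 with hk | hk
    · -- k = 1 : both first args are generators
      have hk' : k = 1 := by omega
      subst hk'
      rcases hc.one_cases with hce | hce <;> rcases hs.one_cases with hse | hse <;>
        rw [hce, hse]
      · exact asc11 hL _ _
      · -- [a, b, t]
        rcases Nat.lt_or_ge kt 2 with hkt | hkt
        · have hkt' : kt = 1 := by omega
          subst hkt'
          rcases ht.one_cases with rfl | rfl
          · exact asc13 hL hR _ _
          · exact asc22 hR _ _
        · obtain ⟨j, t', ht', hcase, hj⟩ := split kt t ht (by omega) hkt
          have hlow : 1 + 1 + j < n := by omega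
          rcases hcase with rfl | rfl
          · rw [star hL hR]
            rw [IH (1 + 1 + j) hlow 1 1 j _ _ t' IsMon.a IsMon.b ht' rfl, zero_mul]
          · rw [swap12 hL, star hL hR,
              IH (1 + 1 + j) hlow 1 1 j _ _ t' IsMon.b IsMon.a ht' rfl]
            simp
      · -- [b, a, t]
        rcases Nat.lt_or_ge kt 2 with hkt | hkt
        · have hkt' : kt = 1 := by omega
          subst hkt'
          rcases ht.one_cases with rfl | rfl
          · exact asc22 hR _ _
          · exact asc13 hL hR _ _
        · obtain ⟨j, t', ht', hcase, hj⟩ := split kt t ht (by omega) hkt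
          have hlow : 1 + 1 + j < n := by omega
          rcases hcase with rfl | rfl
          · rw [swap12 hL, star hL hR,
              IH (1 + 1 + j) hlow 1 1 j _ _ t' IsMon.a IsMon.b ht' rfl]
            simp
          · rw [star hL hR]
            rw [IH (1 + 1 + j) hlow 1 1 j _ _ t' IsMon.b IsMon.a ht' rfl, zero_mul]
      · exact asc11 hL _ _
    · -- k ≥ 2 : split s = e * s' and use Teichmüller
      obtain ⟨j, s', hs', hcase, hj⟩ := split k s hs (by omega) hk
      obtain ⟨e, he, rfl⟩ : ∃ e : R, IsMon a b 1 e ∧ s = e * s' := by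
        rcases hcase with rfl | rfl
        · exact ⟨a, IsMon.a, rfl⟩
        · exact ⟨b, IsMon.b, rfl⟩
      have h := teich e s' t c
      -- components that vanish
      have z1 : asc s' t c = 0 :=
        IH (j + kt + 1) (by omega) j kt 1 s' t c hs' ht hc rfl
      have z2 : asc e s' t = 0 :=
        IH (1 + j + kt) (by omega) 1 j kt e s' t he hs' ht rfl
      have z3 : asc e (s' * t) c = 0 := by
        rw [swap23 hR]
        rw [IHB 1 (by omega) e c (s' * t) (j + kt) he hc (hs'.mul ht) (by omega)]
        exact neg_zero
      have z4 : asc e s' (t * c) = 0 :=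
        IHB j (by omega) e s' (t * c) (kt + 1) he hs' (ht.mul hc) (by omega)
      rw [z1, z2, z3, z4] at h
      rw [cyc hL hR]
      simpa using h
  -- Finally: the general case
  intro i j k p q r hp hq hr hn
  have hi1 := hp.pos
  have hj1 := hq.pos
  have hk1 := hr.pos
  rcases Nat.lt_or_ge i 2 with hi | hi
  · have hi' : i = 1 := by omega
    subst hi'
    exact B j p q r k hp hq hr (by omega)
  · obtain ⟨j', p', hp', hcase, hj'⟩ := split i p hp (by omega) hi
    obtain ⟨e, he, rfl⟩ : ∃ e : R, IsMon a b 1 e ∧ p = e * p' := by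
      rcases hcase with rfl | rfl
      · exact ⟨a, IsMon.a, rfl⟩
      · exact ⟨b, IsMon.b, rfl⟩
    have h := teich e p' q r
    have z1 : asc p' q r = 0 :=
      IH (j' + j + k) (by omega) j' j k p' q r hp' hq hr rfl
    have z2 : asc e p' q = 0 :=
      IH (1 + j' + j) (by omega) 1 j' j e p' q he hp' hq rfl
    have z3 : asc e (p' * q) r = 0 :=
      B (j' + j) e (p' * q) r k he (hp'.mul hq) hr (by omega)
    have z4 : asc e p' (q * r) = 0 :=
      B j' e p' (q * r) (j + k) he hp' (hq.mul hr) (by omega)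
    rw [z1, z2, z3, z4] at h
    simpa using h

end Key

theorem asc_add_left (x x' y z : R) : asc (x + x') y z = asc x y z + asc x' y z := by
  simp only [asc, add_mul]; abel

theorem asc_add_mid (x y y' z : R) : asc x (y + y') z = asc x y z + asc x y' z := by
  simp only [asc, add_mul, mul_add]; abel

theorem asc_add_right (x y z z' : R) : asc x y (z + z') = asc x y z + asc x y z' := by
  simp only [asc, mul_add]; abel

theorem asc_neg_left (x y z : R) : asc (-x) y z = - asc x y z := by
  simp only [asc, neg_mul]; abel

theorem asc_neg_mid (x y z : R) : asc x (-y) z = - asc x y z := by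
  simp only [asc, neg_mul, mul_neg]; abel

theorem asc_neg_right (x y z : R) : asc x y (-z) = - asc x y z := by
  simp only [asc, mul_neg]; abel

theorem asc_zero_left (y z : R) : asc 0 y z = 0 := by
  simp [asc]

theorem asc_zero_mid (x z : R) : asc x 0 z = 0 := by
  simp [asc]

theorem asc_zero_right (x y : R) : asc x y 0 = 0 := by
  simp [asc]

end ArtinAux

open ArtinAux in
/-- **Artin's theorem**: in any alternative ring, the subring generated by two
elements is associative. -/
theorem artin_alternative {R : Type*} [NonAssocRing R]
    (halt_left : ∀ x y : R, x * (x * y) = (x * x) * y)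
    (halt_right : ∀ x y : R, (y * x) * x = y * (x * x))
    (a b : R) :
    ∀ x ∈ NonUnitalSubring.closure ({a, b} : Set R),
      ∀ y ∈ NonUnitalSubring.closure ({a, b} : Set R),
        ∀ z ∈ NonUnitalSubring.closure ({a, b} : Set R),
          (x * y) * z = x * (y * z) := by
  -- the additive subgroup generated by the monomials in a, b
  set M : Set R := {x : R | ∃ n : ℕ, IsMon a b n x} with hM
  set G : AddSubgroup R := AddSubgroup.closure M with hG
  -- G is closed under multiplication
  have Gmul : ∀ x ∈ G, ∀ y ∈ G, x * y ∈ G := by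
    intro x hx
    induction hx using AddSubgroup.closure_induction with
    | mem u hu =>
      intro y hy
      induction hy using AddSubgroup.closure_induction with
      | mem v hv =>
        obtain ⟨m, hm⟩ := hu
        obtain ⟨k, hk⟩ := hv
        exact AddSubgroup.subset_closure ⟨m + k, hm.mul hk⟩
      | zero => rw [mul_zero]; exact zero_mem G
      | add v w _ _ hv hw => rw [mul_add]; exact add_mem hv hw
      | neg v _ hv => rw [mul_neg]; exact neg_mem hv
    | zero => intro y _; rw [zero_mul]; exact zero_mem G
    | add u v _ _ hu hv => intro y hy; rw [add_mul]; exact add_mem (hu y hy) (hv y hy)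
    | neg u _ hu => intro y hy; rw [neg_mul]; exact neg_mem (hu y hy)
  -- every element of the non-unital subring closure lies in G
  have hsub : ∀ x ∈ NonUnitalSubring.closure ({a, b} : Set R), x ∈ G := by
    intro x hx
    induction hx using NonUnitalSubring.closure_induction with
    | mem u hu =>
      rcases hu with rfl | hu
      · exact AddSubgroup.subset_closure ⟨1, IsMon.a⟩
      · rcases hu with rfl
        exact AddSubgroup.subset_closure ⟨1, IsMon.b⟩
    | zero => exact zero_mem G
    | add u v _ _ hu hv => exact add_mem hu hv
    | neg u _ hu => exact neg_mem hu
    | mul u v _ _ hu hv => exact Gmul u hu v hv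
  -- associators vanish on G
  have main : ∀ x ∈ G, ∀ y ∈ G, ∀ z ∈ G, asc x y z = 0 := by
    intro x hx
    induction hx using AddSubgroup.closure_induction with
    | mem p hp =>
      intro y hy
      induction hy using AddSubgroup.closure_induction with
      | mem q hq =>
        intro z hz
        induction hz using AddSubgroup.closure_induction with
        | mem r hr =>
          obtain ⟨i, hi⟩ := hp
          obtain ⟨j, hj⟩ := hq
          obtain ⟨k, hk⟩ := hr
          exact key halt_left halt_right a b (i + j + k) i j k p q r hi hj hk rfl
        | zero => exact asc_zero_right _ _
        | add u v _ _ hu hv => rw [asc_add_right, hu, hv, add_zero]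
        | neg u _ hu => rw [asc_neg_right, hu, neg_zero]
      | zero => intro z _; exact asc_zero_mid _ _
      | add u v _ _ hu hv =>
        intro z hz; rw [asc_add_mid, hu z hz, hv z hz, add_zero]
      | neg u _ hu => intro z hz; rw [asc_neg_mid, hu z hz, neg_zero]
    | zero => intro y _ z _; exact asc_zero_left _ _
    | add u v _ _ hu hv =>
      intro y hy z hz; rw [asc_add_left, hu y hy z hz, hv y hy z hz, add_zero]
    | neg u _ hu => intro y hy z hz; rw [asc_neg_left, hu y hy z hz, neg_zero]
  intro x hx y hy z hz
  exact asc_eq_zero (main x (hsub x hx) y (hsub y hy) z (hsub z hz))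
end

section
/- Let O be the complex octonion algebra, and let A ∈ Herm(3,O) be traceless with A² = 0 and A ≠ 0, written with diagonal (−2t, t+s, t−s) and off-diagonal entries x₁, x₂ (first row/column) and x₃ (in the 2×2 lower-right block). Then the following are equivalent: (i) s² + N(x₃) = 0; (ii) N(x₁) = N(x₂) = 0; (iii) t = 0. -/
open QuadraticMap

/-- For a nonzero traceless `A ∈ Herm(3,O)` with `A² = 0`, written with diagonal
`(−2t, t+s, t−s)` and off-diagonal entries `x₁, x₂, x₃`, the following are
equivalent: (i) `s² + N(x₃) = 0`; (ii) `N(x₁) = N(x₂) = 0`; (iii) `t = 0`. -/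
theorem isotropic_vector_part_tfae {A : Type*} [NonAssocRing A] [Module ℂ A]
    [SMulCommClass ℂ A A] [IsScalarTower ℂ A A]
    (N : QuadraticForm ℂ A)
    (hmul : ∀ x y : A, N (x * y) = N x * N y)
    (hnondeg : ∀ x : A, (∀ y : A, polar N x y = 0) → x = 0)
    (hdim : Module.finrank ℂ A = 8)
    (conjO : A →ₗ[ℂ] A)
    (hconj : ∀ x : A, conjO x = polar N x 1 • (1 : A) - x)
    (t s : ℂ) (x₁ x₂ x₃ : A)
    (M : Matrix (Fin 3) (Fin 3) A)
    (hM : M = !![(-(2*t)) • 1, conjO x₁, conjO x₂;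
                 x₁, (t + s) • 1, conjO x₃;
                 x₂, x₃, (t - s) • 1])
    (hsq : M * M = 0) (hne : M ≠ 0) :
    ((s ^ 2 + N x₃ = 0) ↔ (N x₁ = 0 ∧ N x₂ = 0)) ∧
    ((s ^ 2 + N x₃ = 0) ↔ t = 0) := by
  -- N(1) = 1
  have hN1 : N 1 = 1 := by
    have h := hmul 1 1
    rw [mul_one] at h
    by_cases h0 : N 1 = 0
    · exfalso
      have hz : ∀ x : A, N x = 0 := by
        intro x
        have := hmul 1 x
        rwa [one_mul, h0, zero_mul] at this
      have : Subsingleton A := by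
        refine subsingleton_of_forall_eq 0 fun x => ?_
        exact hnondeg x fun y => by simp [QuadraticMap.polar, hz]
      rw [Module.finrank_zero_of_subsingleton] at hdim
      exact (by norm_num : (0:ℕ) ≠ 8) hdim
    · have h1 : N 1 * 1 = N 1 * N 1 := by rw [mul_one]; exact h
      exact (mul_left_cancel₀ h0 h1).symm
  -- scalars embed injectively
  have hsmul_one : ∀ c : ℂ, c • (1 : A) = 0 → c = 0 := by
    intro c hc
    have h := congrArg N hc
    rw [QuadraticMap.map_smul, QuadraticMap.map_zero, hN1, smul_eq_mul, mul_one] at h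
    exact mul_self_eq_zero.mp h
  -- multiplicativity polarized in the second argument
  have hBmul : ∀ x y z : A, polar N (x * y) (x * z) = N x * polar N y z := by
    intro x y z
    simp only [QuadraticMap.polar, ← mul_add, hmul]
    ring
  -- fully polarized multiplicativity
  have hBlin : ∀ x w y z : A,
      polar N (x * y) (w * z) + polar N (w * y) (x * z) = polar N x w * polar N y z := by
    intro x w y z
    have h := hBmul (x + w) y z
    have hx := hBmul x y z
    have hw := hBmul w y z
    have hNxw : N (x + w) = N x + N w + polar N x w := by
      simp only [QuadraticMap.polar]; ring
    rw [add_mul, add_mul, polar_add_left, polar_add_right, polar_add_right, hNxw] at h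
    linear_combination h - hx - hw
  -- the Cayley–Hamilton identity  x² = T(x)·x − N(x)·1
  have hsq_id : ∀ x : A, x * x = polar N x 1 • x - N x • (1 : A) := by
    intro x
    have h0 : x * x - (polar N x 1 • x - N x • (1 : A)) = 0 := by
      apply hnondeg
      intro z
      have h1 := hBlin x 1 x z
      rw [one_mul, one_mul] at h1
      have h2 : polar N x (x * z) = N x * polar N 1 z := by
        have := hBmul x 1 z
        rwa [mul_one] at this
      rw [polar_sub_left, polar_sub_left, polar_smul_left, polar_smul_left, smul_eq_mul,
        smul_eq_mul]
      linear_combination h1 - h2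
    exact sub_eq_zero.mp h0
  -- conjugate multiplication gives the norm
  have hconjmul : ∀ x : A, conjO x * x = N x • (1 : A) := by
    intro x
    rw [hconj, sub_mul, smul_mul_assoc, one_mul, hsq_id x]
    abel
  have hmulconj : ∀ x : A, x * conjO x = N x • (1 : A) := by
    intro x
    rw [hconj, mul_sub, mul_smul_comm, mul_one, hsq_id x]
    abel
  have hsm : ∀ c d : ℂ, (c • (1 : A)) * (d • (1 : A)) = (c * d) • (1 : A) := by
    intro c d
    rw [smul_mul_assoc, mul_smul_comm, one_mul, smul_smul, mul_comm]
  subst hM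
  -- diagonal entries of M² = 0
  have e1 : 4 * t ^ 2 + N x₁ + N x₂ = 0 := by
    have h := congrFun (congrFun hsq 0) 0
    simp only [Matrix.mul_apply, Fin.sum_univ_three, Matrix.cons_val', Matrix.cons_val_zero,
      Matrix.cons_val_one, Matrix.head_cons, Matrix.head_fin_const, Matrix.empty_val',
      Matrix.cons_val_fin_one, Matrix.zero_apply, Matrix.of_apply, Matrix.cons_val_two, Matrix.tail_cons, Matrix.head_cons] at h
    rw [hconjmul, hconjmul, hsm, ← add_smul, ← add_smul] at h
    have := hsmul_one _ h
    linear_combination this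
  have e2 : (t + s) ^ 2 + N x₁ + N x₃ = 0 := by
    have h := congrFun (congrFun hsq 1) 1
    simp only [Matrix.mul_apply, Fin.sum_univ_three, Matrix.cons_val', Matrix.cons_val_zero,
      Matrix.cons_val_one, Matrix.head_cons, Matrix.head_fin_const, Matrix.empty_val',
      Matrix.cons_val_fin_one, Matrix.zero_apply, Matrix.of_apply, Matrix.cons_val_two, Matrix.tail_cons, Matrix.head_cons] at h
    rw [hmulconj, hconjmul, hsm, ← add_smul, ← add_smul] at h
    have := hsmul_one _ h
    linear_combination this
  have e3 : (t - s) ^ 2 + N x₂ + N x₃ = 0 := by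
    have h := congrFun (congrFun hsq 2) 2
    simp only [Matrix.mul_apply, Fin.sum_univ_three, Matrix.cons_val', Matrix.cons_val_zero,
      Matrix.cons_val_one, Matrix.head_cons, Matrix.head_fin_const, Matrix.empty_val',
      Matrix.cons_val_fin_one, Matrix.zero_apply, Matrix.of_apply, Matrix.cons_val_two, Matrix.tail_cons, Matrix.head_cons] at h
    rw [hmulconj, hmulconj, hsm, ← add_smul, ← add_smul] at h
    have := hsmul_one _ h
    linear_combination this
  -- key scalar identity: s² + N x₃ = t²
  have ht2 : s ^ 2 + N x₃ = t ^ 2 := by linear_combination (e2 + e3 - e1) / 2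
  constructor
  · constructor
    · intro h
      have ht : t = 0 := by
        have : t ^ 2 = 0 := by linear_combination h - ht2
        exact sq_eq_zero_iff.mp this
      constructor
      · linear_combination e2 - h - (t + 2 * s) * ht
      · linear_combination e3 - h - (t - 2 * s) * ht
    · intro ⟨h1, h2⟩
      have ht : t = 0 := by
        have : t ^ 2 = 0 := by linear_combination (e1 - h1 - h2) / 4
        exact sq_eq_zero_iff.mp this
      linear_combination ht2 + t * ht
  · constructor
    · intro h
      have : t ^ 2 = 0 := by linear_combination h - ht2
      exact sq_eq_zero_iff.mp this
    · intro ht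
      linear_combination ht2 + t * ht
end

section
/- For generators g_{r,u} of Spin(9,ℂ) realized inside End_ℂ(O²)⊗ℂ (with r² + N(u) = 1), the induced action on the trace-free hermitian 2×2 octonionic matrix [[s, x],[x̄, −s]] via the vector representation is given by [[s(r²−N(u)) − r⟨x,u⟩, 2rsu + r²x − ux̄u],[2rsū + r²x̄ − ūxū, −s(r²−N(u)) + r⟨x̄,ū⟩]]. -/
open QuadraticMap TensorProduct

variable {A : Type*} [NonAssocRing A] [Module ℂ A]
  [SMulCommClass ℂ A A] [IsScalarTower ℂ A A]
  [Module ℝ A] [IsScalarTower ℝ ℂ A]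

set_option linter.unusedSectionVars false

namespace Spin9Aux

set_option linter.unusedSectionVars false

variable (N : QuadraticForm ℂ A)

theorem P1 (hmul : ∀ x y : A, N (x * y) = N x * N y) (a b c : A) :
    polar (⇑N) (a*b) (a*c) = N a * polar (⇑N) b c := by
  show N (a*b + a*c) - N (a*b) - N (a*c) = N a * (N (b+c) - N b - N c)
  rw [← mul_add, hmul, hmul, hmul]; ring

theorem P2 (hmul : ∀ x y : A, N (x * y) = N x * N y) (a b c : A) :
    polar (⇑N) (a*c) (b*c) = polar (⇑N) a b * N c := by
  show N (a*c + b*c) - N (a*c) - N (b*c) = (N (a+b) - N a - N b) * N c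
  rw [← add_mul, hmul, hmul, hmul]; ring

theorem P3 (hmul : ∀ x y : A, N (x * y) = N x * N y) (a b c d : A) :
    polar (⇑N) (a*b) (c*d) + polar (⇑N) (c*b) (a*d)
      = polar (⇑N) a c * polar (⇑N) b d := by
  have h := P1 N hmul (a+c) b d
  rw [add_mul, add_mul, polar_add_left, polar_add_right, polar_add_right] at h
  have hac : N (a+c) = polar (⇑N) a c + N a + N c := by
    show _ = (N (a+c) - N a - N c) + N a + N c; ring
  rw [hac] at h
  have h1 := P1 N hmul a b d
  have h2 := P1 N hmul c b d
  linear_combination h - h1 - h2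

theorem P4 (hmul : ∀ x y : A, N (x * y) = N x * N y) (a b c d : A) :
    polar (⇑N) (a*b) (c*d) + polar (⇑N) (a*d) (c*b)
      = polar (⇑N) a c * polar (⇑N) b d := by
  have h := P2 N hmul a c (b+d)
  rw [mul_add, mul_add, polar_add_left, polar_add_right, polar_add_right] at h
  have hbd : N (b+d) = polar (⇑N) b d + N b + N d := by
    show _ = (N (b+d) - N b - N d) + N b + N d; ring
  rw [hbd] at h
  have h1 := P2 N hmul a c b
  have h2 := P2 N hmul a c d
  linear_combination h - h1 - h2


theorem LA (hmul : ∀ x y : A, N (x * y) = N x * N y)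
    (hnondeg : ∀ x : A, (∀ y : A, polar (⇑N) x y = 0) → x = 0) (a b : A) :
    a * (a * b) = polar (⇑N) a 1 • (a * b) - N a • b := by
  have key : ∀ z, polar (⇑N) (a*(a*b) - (polar (⇑N) a 1 • (a*b) - N a • b)) z = 0 := by
    intro z
    rw [polar_sub_left, polar_sub_left, polar_smul_left, polar_smul_left]
    have h1 := P3 N hmul a (a*b) 1 z
    rw [one_mul, one_mul] at h1
    have h2 := P1 N hmul a b z
    simp only [smul_eq_mul]
    linear_combination h1 - h2
  exact sub_eq_zero.mp (hnondeg _ key)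

theorem RA (hmul : ∀ x y : A, N (x * y) = N x * N y)
    (hnondeg : ∀ x : A, (∀ y : A, polar (⇑N) x y = 0) → x = 0) (a b : A) :
    (b * a) * a = polar (⇑N) a 1 • (b * a) - N a • b := by
  have key : ∀ z, polar (⇑N) ((b*a)*a - (polar (⇑N) a 1 • (b*a) - N a • b)) z = 0 := by
    intro z
    rw [polar_sub_left, polar_sub_left, polar_smul_left, polar_smul_left]
    have h1 := P4 N hmul (b*a) a z 1
    rw [mul_one, mul_one] at h1
    have h2 := P2 N hmul b z a
    simp only [smul_eq_mul]
    linear_combination h1 - h2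
  exact sub_eq_zero.mp (hnondeg _ key)

variable (conjO : A →ₗ[ℂ] A)

theorem K1 (hmul : ∀ x y : A, N (x * y) = N x * N y)
    (hnondeg : ∀ x : A, (∀ y : A, polar (⇑N) x y = 0) → x = 0)
    (hconj : ∀ x : A, conjO x = polar (⇑N) x 1 • (1 : A) - x) (a b : A) :
    a * (conjO a * b) = N a • b := by
  rw [hconj a, sub_mul, smul_mul_assoc, one_mul, mul_sub, mul_smul_comm,
    LA N hmul hnondeg a b]
  exact sub_sub_cancel _ _

theorem K0 (hmul : ∀ x y : A, N (x * y) = N x * N y)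
    (hnondeg : ∀ x : A, (∀ y : A, polar (⇑N) x y = 0) → x = 0)
    (hconj : ∀ x : A, conjO x = polar (⇑N) x 1 • (1 : A) - x) (a b : A) :
    conjO a * (a * b) = N a • b := by
  rw [hconj a, sub_mul, smul_mul_assoc, one_mul, LA N hmul hnondeg a b]
  exact sub_sub_cancel _ _

theorem R0 (hmul : ∀ x y : A, N (x * y) = N x * N y)
    (hnondeg : ∀ x : A, (∀ y : A, polar (⇑N) x y = 0) → x = 0)
    (hconj : ∀ x : A, conjO x = polar (⇑N) x 1 • (1 : A) - x) (a b : A) :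
    (b * conjO a) * a = N a • b := by
  rw [hconj a, mul_sub, mul_smul_comm, mul_one, sub_mul, smul_mul_assoc,
    RA N hmul hnondeg a b]
  exact sub_sub_cancel _ _

theorem Nadd (a b : A) : N (a + b) = N a + N b + polar (⇑N) a b := by
  show _ = N a + N b + (N (a+b) - N a - N b); ring

theorem K1l (hmul : ∀ x y : A, N (x * y) = N x * N y)
    (hnondeg : ∀ x : A, (∀ y : A, polar (⇑N) x y = 0) → x = 0)
    (hconj : ∀ x : A, conjO x = polar (⇑N) x 1 • (1 : A) - x) (x u y : A) :
    u * (conjO x * y) + x * (conjO u * y) = polar (⇑N) x u • y := by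
  have h := K1 N conjO hmul hnondeg hconj (x + u) y
  simp only [map_add, add_mul, mul_add] at h
  rw [Nadd, K1 N conjO hmul hnondeg hconj x y, K1 N conjO hmul hnondeg hconj u y] at h
  linear_combination (norm := module) h

theorem K0l (hmul : ∀ x y : A, N (x * y) = N x * N y)
    (hnondeg : ∀ x : A, (∀ y : A, polar (⇑N) x y = 0) → x = 0)
    (hconj : ∀ x : A, conjO x = polar (⇑N) x 1 • (1 : A) - x) (x u y : A) :
    conjO u * (x * y) + conjO x * (u * y) = polar (⇑N) x u • y := by
  have h := K0 N conjO hmul hnondeg hconj (x + u) y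
  simp only [map_add, add_mul, mul_add] at h
  rw [Nadd, K0 N conjO hmul hnondeg hconj x y, K0 N conjO hmul hnondeg hconj u y] at h
  linear_combination (norm := module) h


theorem None' (hmul : ∀ x y : A, N (x * y) = N x * N y)
    (hnondeg : ∀ x : A, (∀ y : A, polar (⇑N) x y = 0) → x = 0)
    (hdim : Module.finrank ℂ A = 8) : N 1 = 1 := by
  by_cases h0 : N 1 = 0
  · exfalso
    have hz : ∀ x : A, N x = 0 := fun x => by
      have := hmul x 1; rwa [mul_one, h0, mul_zero] at this
    have h1 : (1 : A) = 0 := hnondeg 1 (fun y => by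
      show N (1 + y) - N 1 - N y = 0; simp [hz])
    have : Subsingleton A := subsingleton_of_zero_eq_one h1.symm
    rw [Module.finrank_zero_of_subsingleton] at hdim
    exact absurd hdim (by norm_num)
  · have h := hmul 1 1
    rw [mul_one] at h
    have h2 : N 1 * N 1 = N 1 * 1 := by rw [mul_one]; linear_combination -h
    exact mul_left_cancel₀ h0 h2

theorem p11 (hmul : ∀ x y : A, N (x * y) = N x * N y)
    (hnondeg : ∀ x : A, (∀ y : A, polar (⇑N) x y = 0) → x = 0)
    (hdim : Module.finrank ℂ A = 8) : polar (⇑N) (1 : A) 1 = 2 := by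
  show N (1 + 1) - N 1 - N 1 = 2
  have h2 : ((1 : A) + 1) = (2 : ℂ) • (1 : A) := (two_smul ℂ (1 : A)).symm
  rw [h2, QuadraticMap.map_smul, None' N hmul hnondeg hdim]
  norm_num

theorem pc1 (hmul : ∀ x y : A, N (x * y) = N x * N y)
    (hnondeg : ∀ x : A, (∀ y : A, polar (⇑N) x y = 0) → x = 0)
    (hdim : Module.finrank ℂ A = 8)
    (hconj : ∀ x : A, conjO x = polar (⇑N) x 1 • (1 : A) - x) (x : A) :
    polar (⇑N) (conjO x) 1 = polar (⇑N) x 1 := by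
  rw [hconj x, polar_sub_left, polar_smul_left, p11 N hmul hnondeg hdim,
    smul_eq_mul]
  ring

theorem cc (hmul : ∀ x y : A, N (x * y) = N x * N y)
    (hnondeg : ∀ x : A, (∀ y : A, polar (⇑N) x y = 0) → x = 0)
    (hdim : Module.finrank ℂ A = 8)
    (hconj : ∀ x : A, conjO x = polar (⇑N) x 1 • (1 : A) - x) (x : A) :
    conjO (conjO x) = x := by
  rw [hconj (conjO x), pc1 N conjO hmul hnondeg hdim hconj, hconj x,
    sub_sub_cancel]

theorem Nc (hmul : ∀ x y : A, N (x * y) = N x * N y)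
    (hnondeg : ∀ x : A, (∀ y : A, polar (⇑N) x y = 0) → x = 0)
    (hdim : Module.finrank ℂ A = 8)
    (hconj : ∀ x : A, conjO x = polar (⇑N) x 1 • (1 : A) - x) (x : A) :
    N (conjO x) = N x := by
  rw [hconj x, sub_eq_add_neg, Nadd, QuadraticMap.map_smul,
    QuadraticMap.map_neg, polar_neg_right, polar_smul_left,
    None' N hmul hnondeg hdim, polar_comm (⇑N) 1 x]
  simp only [smul_eq_mul]
  ring

theorem pcc (hmul : ∀ x y : A, N (x * y) = N x * N y)
    (hnondeg : ∀ x : A, (∀ y : A, polar (⇑N) x y = 0) → x = 0)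
    (hdim : Module.finrank ℂ A = 8)
    (hconj : ∀ x : A, conjO x = polar (⇑N) x 1 • (1 : A) - x) (x u : A) :
    polar (⇑N) (conjO x) (conjO u) = polar (⇑N) x u := by
  rw [hconj x, hconj u]
  simp only [polar_sub_left, polar_sub_right, polar_smul_left, polar_smul_right,
    smul_eq_mul, p11 N hmul hnondeg hdim]
  rw [polar_comm (⇑N) 1 u]
  ring

theorem EE (hmul : ∀ x y : A, N (x * y) = N x * N y)
    (hnondeg : ∀ x : A, (∀ y : A, polar (⇑N) x y = 0) → x = 0)
    (hconj : ∀ x : A, conjO x = polar (⇑N) x 1 • (1 : A) - x) (u x : A) :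
    (u * conjO x) * u = polar (⇑N) x u • u - N u • x := by
  have h := K1l N conjO hmul hnondeg hconj x u 1
  rw [mul_one, mul_one] at h
  have h1 : u * conjO x = polar (⇑N) x u • (1 : A) - x * conjO u :=
    eq_sub_of_add_eq h
  rw [h1, sub_mul, smul_mul_assoc, one_mul, R0 N conjO hmul hnondeg hconj u x]

theorem Econj (hmul : ∀ x y : A, N (x * y) = N x * N y)
    (hnondeg : ∀ x : A, (∀ y : A, polar (⇑N) x y = 0) → x = 0)
    (hdim : Module.finrank ℂ A = 8)
    (hconj : ∀ x : A, conjO x = polar (⇑N) x 1 • (1 : A) - x) (u x : A) :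
    conjO ((u * conjO x) * u) = (conjO u * x) * conjO u := by
  rw [EE N conjO hmul hnondeg hconj, _root_.map_sub, LinearMap.map_smul, LinearMap.map_smul]
  have h2 := EE N conjO hmul hnondeg hconj (conjO u) (conjO x)
  rw [cc N conjO hmul hnondeg hdim hconj x,
    pcc N conjO hmul hnondeg hdim hconj x u,
    Nc N conjO hmul hnondeg hdim hconj u] at h2
  rw [h2]

end Spin9Aux

/-- The operator `Φ(s,x) = [[s, L_x], [L_{x̄}, −s]]` on `O ⊕ O` (the image `κ(V₉)`
consists of the elements `Φ(s,x) ⊗ i`). -/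
def kappaOp (conjO : A →ₗ[ℂ] A) (v : ℂ × A) : Module.End ℂ (A × A) :=
  LinearMap.prod
    (v.1 • LinearMap.fst ℂ A A + (LinearMap.mulLeft ℂ v.2).comp (LinearMap.snd ℂ A A))
    ((LinearMap.mulLeft ℂ (conjO v.2)).comp (LinearMap.fst ℂ A A) - v.1 • LinearMap.snd ℂ A A)

/-- The generator `g_{r,u} = [[r, −L_u], [L_{ū}, r]]` of `Spin(9,ℂ)`
inside `End_ℂ(O²)`; in `End_ℂ(O²) ⊗ ℂ` one takes `g_{r,u} ⊗ 1`. -/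
def spinGen (conjO : A →ₗ[ℂ] A) (r : ℂ) (u : A) : Module.End ℂ (A × A) :=
  LinearMap.prod
    (r • LinearMap.fst ℂ A A - (LinearMap.mulLeft ℂ u).comp (LinearMap.snd ℂ A A))
    ((LinearMap.mulLeft ℂ (conjO u)).comp (LinearMap.fst ℂ A A) + r • LinearMap.snd ℂ A A)

set_option maxHeartbeats 1000000 in
/-- The vector representation `v ↦ g_{r,u} v g_{r,u}⁻¹` (with `g_{r,u}⁻¹ = g_{r,−u}`)
acts on the trace-free hermitian matrix `[[s, x], [x̄, −s]]` (identified via `Φ` with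
`κ(s,x) = Φ(s,x) ⊗ i`) by the formula
`[[s(r²−N u) − r⟨x,u⟩, 2rsu + r²x − ux̄u], [2rsū + r²x̄ − ūxū, −s(r²−N u) + r⟨x̄,ū⟩]]`. -/
theorem spin9_vector_action_formula (N : QuadraticForm ℂ A)
    (hmul : ∀ x y : A, N (x * y) = N x * N y)
    (hnondeg : ∀ x : A, (∀ y : A, polar N x y = 0) → x = 0)
    (hdim : Module.finrank ℂ A = 8)
    (conjO : A →ₗ[ℂ] A)
    (hconj : ∀ x : A, conjO x = polar N x 1 • (1 : A) - x)
    (r s : ℂ) (u x : A) (hru : r ^ 2 + N u = 1) :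
    ((spinGen conjO r u ⊗ₜ[ℝ] (1 : ℂ)) * (kappaOp conjO (s, x) ⊗ₜ[ℝ] Complex.I)
          * (spinGen conjO r (-u) ⊗ₜ[ℝ] (1 : ℂ))
        : Module.End ℂ (A × A) ⊗[ℝ] ℂ)
      = kappaOp conjO (s * (r ^ 2 - N u) - r * polar N x u,
          (2 * (r * s)) • u + (r ^ 2) • x - (u * conjO x) * u) ⊗ₜ[ℝ] Complex.I ∧
    conjO ((2 * (r * s)) • u + (r ^ 2) • x - (u * conjO x) * u)
      = (2 * (r * s)) • conjO u + (r ^ 2) • conjO x - (conjO u * x) * conjO u := by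
  have hE := Spin9Aux.EE N conjO hmul hnondeg hconj u x
  have hEc := Spin9Aux.Econj N conjO hmul hnondeg hdim hconj u x
  have L1 : ∀ y : A, u * (conjO x * (u * y))
      = polar (⇑N) x u • (u * y) - N u • (x * y) := by
    intro y
    have h := Spin9Aux.K1l N conjO hmul hnondeg hconj x u (u * y)
    rw [Spin9Aux.K0 N conjO hmul hnondeg hconj u y, mul_smul_comm] at h
    linear_combination (norm := module) h
  have L3 : ∀ y : A, x * (conjO u * y)
      = polar (⇑N) x u • y - u * (conjO x * y) := by
    intro y
    refine eq_sub_of_add_eq ?_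
    rw [add_comm]
    exact Spin9Aux.K1l N conjO hmul hnondeg hconj x u y
  have L4 : ∀ y : A, conjO u * (x * y)
      = polar (⇑N) x u • y - conjO x * (u * y) := fun y =>
    eq_sub_of_add_eq (Spin9Aux.K0l N conjO hmul hnondeg hconj x u y)
  have L5 : ∀ y : A, u * (conjO u * y) = N u • y :=
    Spin9Aux.K1 N conjO hmul hnondeg hconj u
  have L6 : ∀ y : A, conjO u * (u * y) = N u • y :=
    Spin9Aux.K0 N conjO hmul hnondeg hconj u
  constructor
  · have hEnd : spinGen conjO r u * kappaOp conjO (s, x) * spinGen conjO r (-u)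
        = kappaOp conjO (s * (r ^ 2 - N u) - r * polar N x u,
            (2 * (r * s)) • u + (r ^ 2) • x - (u * conjO x) * u) := by
      apply LinearMap.ext
      rintro ⟨a, b⟩
      simp only [kappaOp, spinGen, Module.End.mul_apply, LinearMap.prod_apply, Function.prod,
        LinearMap.add_apply, LinearMap.sub_apply, LinearMap.smul_apply, LinearMap.coe_comp,
        Function.comp_apply, LinearMap.fst_apply, LinearMap.snd_apply, LinearMap.mulLeft_apply,
        _root_.map_neg, Prod.mk.injEq]
      constructor
      · simp only [hE, _root_.map_sub, _root_.map_add, LinearMap.map_smul,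
          neg_mul, mul_add, add_mul, mul_sub, sub_mul, mul_neg,
          mul_smul_comm, smul_mul_assoc, smul_add, smul_sub, smul_neg, smul_smul,
          L1, L3, L4, L5, L6]
        module
      · simp only [hE, _root_.map_sub, _root_.map_add, LinearMap.map_smul,
          neg_mul, mul_add, add_mul, mul_sub, sub_mul, mul_neg,
          mul_smul_comm, smul_mul_assoc, smul_add, smul_sub, smul_neg, smul_smul,
          L1, L3, L4, L5, L6]
        module
    rw [Algebra.TensorProduct.tmul_mul_tmul, Algebra.TensorProduct.tmul_mul_tmul,
      one_mul, mul_one, hEnd]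
  · rw [_root_.map_sub, _root_.map_add, LinearMap.map_smul, LinearMap.map_smul, hEc]
end
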